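/- Let J ⊂ ℝ^n be a compact convex set containing a point p ∈ ℚ^n, and let r := den(p). Then pllenv(cone J) = (plenv(cone J))_ℤ if and only if (plenv(cone J))_ℤ = (cone J)_ℤ \ (cone J + rα(p))_ℤ. -/

import Mathlib

open Set Pointwise
open scoped Classical

noncomputable section

namespace ArxivFreeSum

/-- A point of `ℝ^m` is an integer lattice point iff all coordinates are integers. -/
def IsLat {m : ℕ} (x : Fin m → ℝ) : Prop := ∀ i, ∃ z : ℤ, x i = (z : ℝ)

/-- The set of integer lattice points of a set `S`. -/
def latt {m : ℕ} (S : Set (Fin m → ℝ)) : Set (Fin m → ℝ) := {x | x ∈ S ∧ IsLat x}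

variable {n : ℕ}

/-- The affine embedding `α : ℝ^n → ℝ^{n+1}`, `a ↦ (a, 1)`. -/
def emb (a : Fin n → ℝ) : Fin (n + 1) → ℝ := Fin.snoc a 1

/-- The cone over `K`: all nonnegative multiples of `α(K)`. -/
def cone (K : Set (Fin n → ℝ)) : Set (Fin (n + 1) → ℝ) :=
  {x | ∃ l : ℝ, ∃ a ∈ K, 0 ≤ l ∧ x = l • emb a}

/-- The last standard basis vector `e_{n+1}` of `ℝ^{n+1}`. -/
def eLast (n : ℕ) : Fin (n + 1) → ℝ := Pi.single (Fin.last n) 1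

/-- The vertical projection `ε_J` onto the lower envelope of `cone J`. -/
def eps (J : Set (Fin n → ℝ)) (x : Fin (n + 1) → ℝ) : Fin (n + 1) → ℝ :=
  x - sSup {l : ℝ | x - l • eLast n ∈ cone J} • eLast n

/-- The lower envelope of `cone J`. -/
def lenv (J : Set (Fin n → ℝ)) : Set (Fin (n + 1) → ℝ) := eps J '' cone J

/-- The lower lattice envelope of `cone J`. -/
def llenv (J : Set (Fin n → ℝ)) : Set (Fin (n + 1) → ℝ) := eps J '' latt (cone J)

/-- `J ⊕ K` is a free sum. -/
def IsFreeSum (J K : Set (Fin n → ℝ)) : Prop :=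
  (0 : Fin n → ℝ) ∈ J ∧ (0 : Fin n → ℝ) ∈ K ∧
    ∀ m : Fin n → ℝ, m ∈ Submodule.span ℝ (J ∪ K) → IsLat m →
      ∃! q : (Fin n → ℝ) × (Fin n → ℝ),
        (q.1 ∈ Submodule.span ℝ J ∧ IsLat q.1) ∧
        (q.2 ∈ Submodule.span ℝ K ∧ IsLat q.2) ∧ m = q.1 + q.2

/-- `N_{J,K}(m)`: the number of pairs of lattice points of `cone J` and `cone K` summing
to `m`. -/
def Npairs (J K : Set (Fin n → ℝ)) (m : Fin (n + 1) → ℤ) : ℕ :=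
  Set.ncard {q : (Fin (n + 1) → ℝ) × (Fin (n + 1) → ℝ) |
    q.1 ∈ latt (cone J) ∧ q.2 ∈ latt (cone K) ∧ q.1 + q.2 = fun i => (m i : ℝ)}

/-- The coefficientwise form of the multivariate Braun equation
`σ_{cone(J⊕K)} = (1 - z_{n+1}) σ_{cone J} σ_{cone K}`. -/
def BraunEq (J K : Set (Fin n → ℝ)) : Prop :=
  ∀ m : Fin (n + 1) → ℤ,
    (Npairs J K m : ℤ) - (Npairs J K (m - Pi.single (Fin.last n) 1) : ℤ) =
      if (fun i => (m i : ℝ)) ∈ cone (convexHull ℝ (J ∪ K)) then 1 else 0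

/-- A rational polytope: convex hull of finitely many rational points. -/
def IsRatPolytope (P : Set (Fin n → ℝ)) : Prop :=
  ∃ V : Finset (Fin n → ℝ), (∀ v ∈ V, ∀ i, ∃ q : ℚ, v i = (q : ℝ)) ∧
    P = convexHull ℝ (V : Set (Fin n → ℝ))

/-- A lattice polytope: convex hull of finitely many lattice points. -/
def IsLatPolytope (P : Set (Fin n → ℝ)) : Prop :=
  ∃ V : Finset (Fin n → ℝ), (∀ v ∈ V, IsLat v) ∧ P = convexHull ℝ (V : Set (Fin n → ℝ))

/-- The polar dual `P^∨ ⊆ (lin P)^*` of a polytope `P` containing the origin. -/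
def dualSet (P : Set (Fin n → ℝ)) : Set (Module.Dual ℝ (Submodule.span ℝ P)) :=
  {φ | ∀ a : Submodule.span ℝ P, (a : Fin n → ℝ) ∈ P → φ a ≤ 1}

/-- Membership in the dual integer lattice `(lin P)^*_ℤ`. -/
def IsDualLatticePt (P : Set (Fin n → ℝ)) (φ : Module.Dual ℝ (Submodule.span ℝ P)) : Prop :=
  ∀ a : Submodule.span ℝ P, IsLat (a : Fin n → ℝ) → ∃ z : ℤ, φ a = (z : ℝ)

/-- `P^∨` is a lattice polyhedron: every vertex (= extreme point) of `P^∨` lies in the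
dual integer lattice. -/
def DualIsLatticePolyhedron (P : Set (Fin n → ℝ)) : Prop :=
  ∀ φ ∈ Set.extremePoints ℝ (dualSet P), IsDualLatticePt P φ

/-- `den(P^∨)`: the smallest positive integer `d` such that `d • P^∨` is a lattice
polyhedron. -/
def dualDen (P : Set (Fin n → ℝ)) : ℕ :=
  sInf {d : ℕ | 0 < d ∧ ∀ φ ∈ Set.extremePoints ℝ (dualSet P), IsDualLatticePt P ((d : ℝ) • φ)}

/-- `L_P(k)`, with `L_P(0) = 1`. -/
def ehr (P : Set (Fin n → ℝ)) (k : ℕ) : ℕ :=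
  if k = 0 then 1 else Set.ncard (latt ((k : ℝ) • P))

/-- The coefficientwise form of `Ehr_{P⊕Q}(t) = (1-t) Ehr_P(t) Ehr_Q(t)`. -/
def EhrEq (P Q : Set (Fin n → ℝ)) : Prop :=
  ∀ k : ℕ,
    (ehr (convexHull ℝ (P ∪ Q)) k : ℤ) =
      (∑ i ∈ Finset.range (k + 1), (ehr P i : ℤ) * (ehr Q (k - i) : ℤ)) -
        ∑ i ∈ Finset.range k, (ehr P i : ℤ) * (ehr Q (k - 1 - i) : ℤ)

/-- `P` is reflexive: a lattice polytope containing the origin in its relative interior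
whose polar dual is a lattice polytope. -/
def IsReflexive (P : Set (Fin n → ℝ)) : Prop :=
  IsLatPolytope P ∧ (0 : Fin n → ℝ) ∈ intrinsicInterior ℝ P ∧ DualIsLatticePolyhedron P

/-- `P` is Gorenstein of index `k`. -/
def IsGorenstein (P : Set (Fin n → ℝ)) (k : ℕ) : Prop :=
  IsLatPolytope P ∧ 0 < k ∧
    ∃ m : Fin n → ℝ, IsLat m ∧ IsReflexive ((fun x => x - m) '' ((k : ℝ) • P))

/-- `p` is a rational point. -/
def IsRatPt (p : Fin n → ℝ) : Prop := ∀ i, ∃ q : ℚ, p i = (q : ℝ)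

/-- Membership in the lattice `Λ^p` generated by `e_1, …, e_n` and `p`. -/
def InLambda (p x : Fin n → ℝ) : Prop :=
  ∃ (z : Fin n → ℤ) (c : ℤ), x = (fun i => (z i : ℝ)) + (c : ℝ) • p

/-- `den(p)`: the lcm of the denominators of the coordinates of `p`, i.e. the least
positive integer `r` with `r • p` a lattice point. -/
def denPt (p : Fin n → ℝ) : ℕ := sInf {r : ℕ | 0 < r ∧ IsLat ((r : ℝ) • p)}

/-- The projection `ε^p_J` parallel to `α(p)` onto the `p`-lower envelope of `cone J`. -/
def epsP (p : Fin n → ℝ) (J : Set (Fin n → ℝ)) (x : Fin (n + 1) → ℝ) : Fin (n + 1) → ℝ :=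
  x - sSup {l : ℝ | x - l • emb p ∈ cone J} • emb p

/-- The `p`-lower envelope of `cone J`. -/
def plenv (p : Fin n → ℝ) (J : Set (Fin n → ℝ)) : Set (Fin (n + 1) → ℝ) := epsP p J '' cone J

/-- The `p`-lower lattice envelope of `cone J`. -/
def pllenv (p : Fin n → ℝ) (J : Set (Fin n → ℝ)) : Set (Fin (n + 1) → ℝ) :=
  epsP p J '' latt (cone J)

/-- `J ⊕ K` is an affine free sum with common (rational) point `p`. -/
def IsAffineFreeSum (J K : Set (Fin n → ℝ)) (p : Fin n → ℝ) : Prop :=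
  IsRatPt p ∧ p ∈ J ∧ p ∈ K ∧
    ((affineSpan ℝ J : Set (Fin n → ℝ)) ∩ (affineSpan ℝ K : Set (Fin n → ℝ)) = {p}) ∧
    ∀ m : Fin n → ℝ, m ∈ Submodule.span ℝ ((fun x => x - p) '' (J ∪ K)) → InLambda p m →
      ∃! q : (Fin n → ℝ) × (Fin n → ℝ),
        (q.1 ∈ Submodule.span ℝ ((fun x => x - p) '' J) ∧ InLambda p q.1) ∧
        (q.2 ∈ Submodule.span ℝ ((fun x => x - p) '' K) ∧ InLambda p q.2) ∧ m = q.1 + q.2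


/-! ### Auxiliary lemmas for Proposition 5.5 -/

section Aux55

lemma emb_last (a : Fin n → ℝ) : emb a (Fin.last n) = 1 := Fin.snoc_last _ _

lemma emb_castSucc (a : Fin n → ℝ) (j : Fin n) : emb a j.castSucc = a j :=
  Fin.snoc_castSucc _ _ _

lemma cone_rep {J : Set (Fin n → ℝ)} {x : Fin (n + 1) → ℝ} (hx : x ∈ cone J) :
    ∃ a ∈ J, 0 ≤ x (Fin.last n) ∧ x = x (Fin.last n) • emb a := by
  obtain ⟨l, a, ha, hl, hxe⟩ := hx
  have hlast : x (Fin.last n) = l := by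
    rw [hxe]; simp [emb_last]
  exact ⟨a, ha, by rw [hlast]; exact hl, by rw [hlast, hxe]⟩

lemma smul_mem_cone' {J : Set (Fin n → ℝ)} {c : ℝ} (hc : 0 ≤ c) {x} (hx : x ∈ cone J) :
    c • x ∈ cone J := by
  obtain ⟨l, a, ha, hl, rfl⟩ := hx
  exact ⟨c * l, a, ha, mul_nonneg hc hl, smul_smul c l _⟩

lemma add_mem_cone' {J : Set (Fin n → ℝ)} (hJ : Convex ℝ J) {x y}
    (hx : x ∈ cone J) (hy : y ∈ cone J) : x + y ∈ cone J := by
  obtain ⟨l, a, ha, hl, rfl⟩ := hx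
  obtain ⟨k, b, hb, hk, rfl⟩ := hy
  rcases eq_or_lt_of_le (add_nonneg hl hk) with h0 | h0
  · have hl0 : l = 0 := by linarith
    have hk0 : k = 0 := by linarith
    exact ⟨0, a, ha, le_refl 0, by simp [hl0, hk0]⟩
  · have hne : l + k ≠ 0 := ne_of_gt h0
    refine ⟨l + k, (l / (l + k)) • a + (k / (l + k)) • b,
      hJ ha hb (div_nonneg hl h0.le) (div_nonneg hk h0.le) (by field_simp),
      (add_nonneg hl hk), ?_⟩
    funext i
    refine Fin.lastCases ?_ (fun j => ?_) i
    · simp [emb_last]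
    · simp only [Pi.add_apply, Pi.smul_apply, emb_castSucc, smul_eq_mul]
      field_simp

variable (J : Set (Fin n → ℝ)) (p : Fin n → ℝ)

/-- The set of shifts `l` with `x - l • α(p)` still in the cone. -/
def lset (x : Fin (n + 1) → ℝ) : Set ℝ := {l : ℝ | x - l • emb p ∈ cone J}

lemma epsP_eq (x : Fin (n + 1) → ℝ) :
    epsP p J x = x - sSup (lset J p x) • emb p := rfl

lemma lset_le_last {x : Fin (n + 1) → ℝ} {l : ℝ} (hl : l ∈ lset J p x) :
    l ≤ x (Fin.last n) := by
  obtain ⟨a, ha, h0, -⟩ := cone_rep hl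
  have hc : (x - l • emb p) (Fin.last n) = x (Fin.last n) - l := by
    simp [emb_last]
  rw [hc] at h0; linarith

lemma bddAbove_lset (x : Fin (n + 1) → ℝ) : BddAbove (lset J p x) :=
  ⟨x (Fin.last n), fun _ hl => lset_le_last J p hl⟩

lemma zero_mem_lset {x : Fin (n + 1) → ℝ} (hx : x ∈ cone J) : 0 ∈ lset J p x := by
  show x - (0 : ℝ) • emb p ∈ cone J
  simpa using hx

lemma lset_downward (hJconv : Convex ℝ J) (hpJ : p ∈ J) {x : Fin (n + 1) → ℝ}
    {l l' : ℝ} (hl : l ∈ lset J p x) (hle : l' ≤ l) : l' ∈ lset J p x := by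
  have hv : (l - l') • emb p ∈ cone J := ⟨l - l', p, hpJ, by linarith, rfl⟩
  have h := add_mem_cone' hJconv hl hv
  show x - l' • emb p ∈ cone J
  have : x - l' • emb p = x - l • emb p + (l - l') • emb p := by
    rw [sub_smul]; abel
  rw [this]; exact h

lemma lt_sSup_mem_lset (hJconv : Convex ℝ J) (hpJ : p ∈ J) {x : Fin (n + 1) → ℝ}
    (hx : x ∈ cone J) {t : ℝ} (ht : t < sSup (lset J p x)) : t ∈ lset J p x := by
  obtain ⟨l, hl, hlt⟩ := exists_lt_of_lt_csSup ⟨0, zero_mem_lset J p hx⟩ ht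
  exact lset_downward J p hJconv hpJ hl hlt.le

lemma sSup_lset_shift (hJconv : Convex ℝ J) (hpJ : p ∈ J) {x : Fin (n + 1) → ℝ}
    {t : ℝ} (ht : t ∈ lset J p x) :
    sSup (lset J p (x - t • emb p)) = sSup (lset J p x) - t := by
  have hmem : ∀ l : ℝ, l ∈ lset J p (x - t • emb p) ↔ l + t ∈ lset J p x := by
    intro l
    have h : x - t • emb p - l • emb p = x - (l + t) • emb p := by
      rw [add_smul]; abel
    show (x - t • emb p - l • emb p ∈ cone J) ↔ (x - (l + t) • emb p ∈ cone J)
    rw [h]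
  have hne : (lset J p (x - t • emb p)).Nonempty := ⟨0, by rw [hmem]; simpa using ht⟩
  have hbdd := bddAbove_lset J p (x - t • emb p)
  have hne' : (lset J p x).Nonempty := ⟨t, ht⟩
  have hbdd' := bddAbove_lset J p x
  apply le_antisymm
  · apply csSup_le hne
    intro l hl
    rw [hmem] at hl
    have := le_csSup hbdd' hl
    linarith
  · rw [sub_le_iff_le_add]
    apply csSup_le hne'
    intro l hl
    have hl' : l - t ∈ lset J p (x - t • emb p) := by
      rw [hmem]; simpa using hl
    have := le_csSup hbdd hl'
    linarith

lemma sSup_lset_nonneg {x : Fin (n + 1) → ℝ} (hx : x ∈ cone J) :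
    0 ≤ sSup (lset J p x) :=
  le_csSup (bddAbove_lset J p x) (zero_mem_lset J p hx)

lemma norm_emb_le (hJcpt : IsCompact J) :
    ∃ M : ℝ, ∀ a ∈ J, ‖emb a‖ ≤ M := by
  obtain ⟨M0, hM0⟩ := isBounded_iff_forall_norm_le.1 hJcpt.isBounded
  refine ⟨max M0 1, fun a ha => ?_⟩
  rw [pi_norm_le_iff_of_nonneg (le_trans zero_le_one (le_max_right _ _))]
  intro i
  refine Fin.lastCases ?_ (fun j => ?_) i
  · rw [emb_last]
    simpa using le_max_right M0 1
  · rw [emb_castSucc]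
    exact le_trans (norm_le_pi_norm a j) (le_trans (hM0 a ha) (le_max_left _ _))

lemma sSup_mem_lset (hJconv : Convex ℝ J) (hJcpt : IsCompact J) (hpJ : p ∈ J)
    {x : Fin (n + 1) → ℝ} (hx : x ∈ cone J) :
    sSup (lset J p x) ∈ lset J p x := by
  set m := sSup (lset J p x) with hm
  have hne : (lset J p x).Nonempty := ⟨0, zero_mem_lset J p hx⟩
  have hbdd := bddAbove_lset J p x
  have hm0 : 0 ≤ m := sSup_lset_nonneg J p hx
  have hmle : m ≤ x (Fin.last n) := csSup_le hne fun _ hl => lset_le_last J p hl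
  have rep : ∀ l ∈ lset J p x, ∃ a ∈ J,
      x - l • emb p = (x (Fin.last n) - l) • emb a := by
    intro l hl
    obtain ⟨a, ha, -, hreq⟩ := cone_rep hl
    have hc : (x - l • emb p) (Fin.last n) = x (Fin.last n) - l := by
      simp [emb_last]
    rw [hc] at hreq
    exact ⟨a, ha, hreq⟩
  obtain ⟨M, hM⟩ := norm_emb_le J hJcpt
  have hMnn : 0 ≤ M := le_trans (norm_nonneg _) (hM p hpJ)
  rcases eq_or_lt_of_le hmle with hμ0 | hμpos
  · -- x (last) = m : the projected point is 0
    have key : x - m • emb p = 0 := by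
      rw [← norm_le_zero_iff]
      refine le_of_forall_pos_le_add fun ε hε => ?_
      have hDpos : (0:ℝ) < M + ‖emb p‖ + 1 := by positivity
      obtain ⟨l, hl, hlt⟩ := exists_lt_of_lt_csSup hne
        (show m - ε / (M + ‖emb p‖ + 1) < m by
          have : 0 < ε / (M + ‖emb p‖ + 1) := by positivity
          linarith)
      have hlm : l ≤ m := le_csSup hbdd hl
      obtain ⟨a, ha, hrep⟩ := rep l hl
      have hxl : x (Fin.last n) - l = m - l := by rw [← hμ0]
      have hml : m - l ≤ ε / (M + ‖emb p‖ + 1) := by linarith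
      have hkey : (m - l) * (M + ‖emb p‖ + 1) ≤ ε := by
        rw [← le_div_iff₀ hDpos]; exact hml
      have step1 : x - m • emb p = (x - l • emb p) + (l - m) • emb p := by
        rw [sub_smul]; abel
      calc ‖x - m • emb p‖ ≤ ‖x - l • emb p‖ + ‖(l - m) • emb p‖ := by
            rw [step1]; exact norm_add_le _ _
        _ = (m - l) * ‖emb a‖ + (m - l) * ‖emb p‖ := by
            rw [hrep, hxl, norm_smul, norm_smul, Real.norm_eq_abs, Real.norm_eq_abs,
              abs_of_nonneg (by linarith : (0:ℝ) ≤ m - l),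
              abs_of_nonpos (by linarith : l - m ≤ 0)]
            ring_nf
        _ ≤ (m - l) * M + (m - l) * ‖emb p‖ := by
            have := hM a ha
            nlinarith [norm_nonneg (emb a)]
        _ ≤ (m - l) * (M + ‖emb p‖ + 1) := by nlinarith [norm_nonneg (emb p)]
        _ ≤ ε := hkey
        _ ≤ 0 + ε := by linarith
    show x - m • emb p ∈ cone J
    rw [key]
    exact ⟨0, p, hpJ, le_refl 0, by simp⟩
  · -- x (last) > m
    set μ := x (Fin.last n) - m with hμ
    have hμpos' : 0 < μ := by simp only [hμ]; linarith
    have hcont : Continuous fun a : Fin n → ℝ => μ • emb a := by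
      refine continuous_pi fun i => ?_
      refine Fin.lastCases ?_ (fun j => ?_) i
      · simp only [Pi.smul_apply, emb_last, smul_eq_mul, mul_one]
        exact continuous_const
      · simp only [Pi.smul_apply, emb_castSucc, smul_eq_mul]
        exact continuous_const.mul (continuous_apply j)
    have hScl : IsClosed ((fun a : Fin n → ℝ => μ • emb a) '' J) :=
      (hJcpt.image hcont).isClosed
    have hclos : x - m • emb p ∈ closure ((fun a : Fin n → ℝ => μ • emb a) '' J) := by
      rw [Metric.mem_closure_iff]
      intro ε hε
      set K := ‖x - x (Fin.last n) • emb p‖ + 1 with hK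
      have hKpos : 0 < K := by positivity
      have hd : 0 < ε * μ / K := by positivity
      obtain ⟨l, hl, hlt⟩ := exists_lt_of_lt_csSup hne
        (show m - ε * μ / K < m by linarith)
      have hlm : l ≤ m := le_csSup hbdd hl
      obtain ⟨a, ha, hrep⟩ := rep l hl
      refine ⟨μ • emb a, ⟨a, ha, rfl⟩, ?_⟩
      have hμl : μ ≤ x (Fin.last n) - l := by simp only [hμ]; linarith
      have hμlpos : 0 < x (Fin.last n) - l := lt_of_lt_of_le hμpos' hμl
      have h1 : μ • emb a = (μ / (x (Fin.last n) - l)) • (x - l • emb p) := by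
        rw [hrep, smul_smul]
        congr 1
        field_simp
      have hid : (x - m • emb p) - μ • emb a
          = ((m - l) / (x (Fin.last n) - l)) • (x - x (Fin.last n) • emb p) := by
        rw [h1, hμ]
        have hne0 : x (Fin.last n) - l ≠ 0 := ne_of_gt hμlpos
        match_scalars <;> field_simp <;> ring
      rw [dist_eq_norm, hid, norm_smul, Real.norm_eq_abs,
        abs_of_nonneg (div_nonneg (by linarith) hμlpos.le)]
      have hw : ‖x - x (Fin.last n) • emb p‖ < K := by rw [hK]; linarith
      calc (m - l) / (x (Fin.last n) - l) * ‖x - x (Fin.last n) • emb p‖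
          ≤ (m - l) / μ * ‖x - x (Fin.last n) • emb p‖ := by
            gcongr
        _ ≤ (ε * μ / K) / μ * ‖x - x (Fin.last n) • emb p‖ := by
            gcongr
            linarith
        _ = (ε / K) * ‖x - x (Fin.last n) • emb p‖ := by
            field_simp
        _ < (ε / K) * K := by
            exact mul_lt_mul_of_pos_left hw (div_pos hε hKpos)
        _ = ε := by field_simp
    rw [hScl.closure_eq] at hclos
    obtain ⟨a, ha, heq⟩ := hclos
    exact ⟨μ, a, ha, hμpos'.le, heq.symm⟩

/-! #### Lattice lemmas -/

lemma IsLat.sub' {m : ℕ} {x y : Fin m → ℝ} (hx : IsLat x) (hy : IsLat y) :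
    IsLat (x - y) := fun i => by
  obtain ⟨z1, h1⟩ := hx i
  obtain ⟨z2, h2⟩ := hy i
  exact ⟨z1 - z2, by rw [Pi.sub_apply, h1, h2, ← Int.cast_sub]⟩

lemma isLat_zsmul {m : ℕ} (c : ℤ) {y : Fin m → ℝ} (hy : IsLat y) :
    IsLat ((c : ℝ) • y) := fun i => by
  obtain ⟨z, hz⟩ := hy i
  exact ⟨c * z, by rw [Pi.smul_apply, smul_eq_mul, hz, ← Int.cast_mul]⟩

lemma rat_cast_mul_den (q : ℚ) : ((q.den : ℝ)) * (q : ℝ) = ((q.num : ℝ)) := by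
  have hd : (q.den : ℝ) ≠ 0 := Nat.cast_ne_zero.mpr q.den_nz
  rw [Rat.cast_def]
  field_simp

lemma denPt_pos_isLat (hp : IsRatPt p) :
    0 < denPt p ∧ IsLat ((denPt p : ℝ) • p) := by
  have hne : {r : ℕ | 0 < r ∧ IsLat ((r : ℝ) • p)}.Nonempty := by
    choose q hq using hp
    refine ⟨∏ i, (q i).den, Finset.prod_pos fun i _ => (q i).pos, fun i => ?_⟩
    refine ⟨(∏ j ∈ Finset.univ.erase i, ((q j).den : ℤ)) * (q i).num, ?_⟩
    have hsplit : ((∏ j, (q j).den : ℕ) : ℝ) * (q i : ℝ)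
        = ((∏ j ∈ Finset.univ.erase i, (q j).den : ℕ) : ℝ) * (((q i).den : ℝ) * (q i : ℝ)) := by
      rw [← Finset.mul_prod_erase Finset.univ (fun j => (q j).den) (Finset.mem_univ i)]
      push_cast
      ring
    rw [Pi.smul_apply, smul_eq_mul, hq i, hsplit, rat_cast_mul_den]
    push_cast
    ring
  exact ⟨(Nat.sInf_mem hne).1, (Nat.sInf_mem hne).2⟩

lemma denPt_dvd (hp : IsRatPt p) {z : ℤ} (hz : IsLat ((z : ℝ) • p)) :
    (denPt p : ℤ) ∣ z := by
  obtain ⟨hrpos, hrlat⟩ := denPt_pos_isLat p hp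
  have hrz : ((denPt p : ℤ)) ≠ 0 := by exact_mod_cast hrpos.ne'
  have hs_nonneg : 0 ≤ z % (denPt p : ℤ) := Int.emod_nonneg z hrz
  have hs_lt : z % (denPt p : ℤ) < (denPt p : ℤ) :=
    Int.emod_lt_of_pos z (by exact_mod_cast hrpos)
  have hslat : IsLat (((z % (denPt p : ℤ) : ℤ) : ℝ) • p) := by
    have hrw : ((z % (denPt p : ℤ) : ℤ) : ℝ) • p
        = (z : ℝ) • p - ((z / (denPt p : ℤ) : ℤ) : ℝ) • ((denPt p : ℝ) • p) := by
      rw [smul_smul, ← sub_smul]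
      congr 1
      push_cast [Int.emod_def]
      ring
    rw [hrw]
    exact IsLat.sub' hz (isLat_zsmul _ hrlat)
  rcases eq_or_lt_of_le hs_nonneg with h0 | hpos
  · exact Int.dvd_of_emod_eq_zero h0.symm
  · exfalso
    have hcast : (((z % (denPt p : ℤ)).toNat : ℕ) : ℝ) = ((z % (denPt p : ℤ) : ℤ) : ℝ) := by
      rw [← Int.cast_natCast, Int.toNat_of_nonneg hs_nonneg]
    have hmem : (z % (denPt p : ℤ)).toNat ∈ {s : ℕ | 0 < s ∧ IsLat ((s : ℝ) • p)} := by
      constructor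
      · omega
      · rw [hcast]; exact hslat
    have h2 : denPt p ≤ (z % (denPt p : ℤ)).toNat := Nat.sInf_le hmem
    omega

lemma isLat_den_smul_emb (hp : IsRatPt p) : IsLat ((denPt p : ℝ) • emb p) := by
  intro i
  refine Fin.lastCases ?_ (fun j => ?_) i
  · exact ⟨denPt p, by simp [emb_last]⟩
  · obtain ⟨w, hw⟩ := (denPt_pos_isLat p hp).2 j
    refine ⟨w, ?_⟩
    rw [Pi.smul_apply, smul_eq_mul, emb_castSucc]
    rw [Pi.smul_apply, smul_eq_mul] at hw
    exact hw

lemma isLat_nsmul_den_emb (hp : IsRatPt p) (k : ℕ) :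
    IsLat (((k : ℝ) * (denPt p : ℝ)) • emb p) := by
  have h2 := isLat_zsmul ((k : ℕ) : ℤ) (isLat_den_smul_emb p hp)
  have heq : (((k : ℕ) : ℤ) : ℝ) • ((denPt p : ℝ) • emb p)
      = ((k : ℝ) * (denPt p : ℝ)) • emb p := by
    rw [smul_smul]
    norm_num
  rwa [heq] at h2

lemma exists_nat_mul_of_isLat_smul_emb (hp : IsRatPt p) {c : ℝ} (hc : 0 ≤ c)
    (h : IsLat (c • emb p)) : ∃ k : ℕ, c = (k : ℝ) * (denPt p : ℝ) := by
  obtain ⟨z, hzc⟩ := h (Fin.last n)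
  have hc' : c = (z : ℝ) := by
    rw [Pi.smul_apply, smul_eq_mul, emb_last, mul_one] at hzc
    exact hzc
  have hlat : IsLat ((z : ℝ) • p) := by
    intro j
    obtain ⟨w, hw⟩ := h j.castSucc
    rw [Pi.smul_apply, smul_eq_mul, emb_castSucc] at hw
    exact ⟨w, by rw [Pi.smul_apply, smul_eq_mul, ← hc']; exact hw⟩
  obtain ⟨t, ht⟩ := denPt_dvd p hp hlat
  have hrpos : 0 < denPt p := (denPt_pos_isLat p hp).1
  have hrZ : (0:ℤ) < (denPt p : ℤ) := by exact_mod_cast hrpos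
  have hz0 : 0 ≤ z := by rw [hc'] at hc; exact_mod_cast hc
  have ht0 : 0 ≤ t := by
    by_contra hneg
    push_neg at hneg
    nlinarith [ht ▸ hz0]
  refine ⟨t.toNat, ?_⟩
  have hcast : ((t.toNat : ℕ) : ℝ) = ((t : ℤ) : ℝ) := by
    rw [← Int.cast_natCast, Int.toNat_of_nonneg ht0]
  rw [hc', ht, hcast]
  push_cast
  ring

/-! #### Membership characterizations -/

lemma mem_latt_image_iff {x : Fin (n + 1) → ℝ} :
    x ∈ latt ((fun y => y + (denPt p : ℝ) • emb p) '' cone J) ↔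
      (x - (denPt p : ℝ) • emb p ∈ cone J ∧ IsLat x) := by
  constructor
  · rintro ⟨⟨y, hy, rfl⟩, hlat⟩
    exact ⟨by simpa using hy, hlat⟩
  · rintro ⟨hy, hlat⟩
    exact ⟨⟨x - (denPt p : ℝ) • emb p, hy, by simp⟩, hlat⟩

lemma mem_latt_plenv_iff (hJconv : Convex ℝ J) (hJcpt : IsCompact J) (hpJ : p ∈ J)
    {x : Fin (n + 1) → ℝ} :
    x ∈ latt (plenv p J) ↔ IsLat x ∧ x ∈ cone J ∧ sSup (lset J p x) = 0 := by
  constructor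
  · rintro ⟨⟨z, hz, rfl⟩, hlat⟩
    have hatt := sSup_mem_lset J p hJconv hJcpt hpJ hz
    rw [epsP_eq]
    refine ⟨by rw [epsP_eq] at hlat; exact hlat, hatt, ?_⟩
    have hsh := sSup_lset_shift J p hJconv hpJ hatt
    rw [hsh]
    exact sub_self _
  · rintro ⟨hlat, hx, hsup⟩
    refine ⟨⟨x, hx, ?_⟩, hlat⟩
    rw [epsP_eq, hsup]
    simp

end Aux55

/-- Proposition 5.5, (a) ↔ (b). -/
theorem pllenv_eq_iff_rind {n : ℕ} (hn : 1 ≤ n) (J : Set (Fin n → ℝ))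
    (hJconv : Convex ℝ J) (hJcpt : IsCompact J) (p : Fin n → ℝ) (hp : IsRatPt p)
    (hpJ : p ∈ J) :
    pllenv p J = latt (plenv p J) ↔
      latt (plenv p J) =
        latt (cone J) \ latt ((fun x => x + (denPt p : ℝ) • emb p) '' cone J) := by
  have hrpos : 0 < denPt p := (denPt_pos_isLat p hp).1
  have hrR : (0:ℝ) < (denPt p : ℝ) := by exact_mod_cast hrpos
  constructor
  · -- (a) → (b)
    intro ha
    ext x
    rw [mem_latt_plenv_iff J p hJconv hJcpt hpJ, Set.mem_diff]
    constructor
    · rintro ⟨hlat, hx, hsup⟩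
      refine ⟨⟨hx, hlat⟩, fun hmem => ?_⟩
      obtain ⟨hxr, -⟩ := (mem_latt_image_iff J p).1 hmem
      have hle : (denPt p : ℝ) ≤ sSup (lset J p x) :=
        le_csSup (bddAbove_lset J p x) hxr
      rw [hsup] at hle
      linarith
    · rintro ⟨⟨hx, hlat⟩, hnot⟩
      have hxr : x - (denPt p : ℝ) • emb p ∉ cone J := fun h =>
        hnot ((mem_latt_image_iff J p).2 ⟨h, hlat⟩)
      have hatt := sSup_mem_lset J p hJconv hJcpt hpJ hx
      have hmlt : sSup (lset J p x) < (denPt p : ℝ) := by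
        by_contra hge
        push_neg at hge
        exact hxr (lset_downward J p hJconv hpJ hatt hge)
      have hmem : epsP p J x ∈ pllenv p J := ⟨x, ⟨hx, hlat⟩, rfl⟩
      rw [ha, mem_latt_plenv_iff J p hJconv hJcpt hpJ] at hmem
      obtain ⟨hlat', -, -⟩ := hmem
      have hmv : IsLat (sSup (lset J p x) • emb p) := by
        have hsub : sSup (lset J p x) • emb p = x - epsP p J x := by
          rw [epsP_eq]; abel
        rw [hsub]
        exact IsLat.sub' hlat hlat'
      obtain ⟨k, hk⟩ := exists_nat_mul_of_isLat_smul_emb p hp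
        (sSup_lset_nonneg J p hx) hmv
      have hk0 : (k : ℝ) = 0 := by
        by_contra hne
        have h1 : (1:ℝ) ≤ (k : ℝ) := by
          have : k ≠ 0 := fun h => hne (by rw [h]; norm_num)
          exact_mod_cast Nat.one_le_iff_ne_zero.2 this
        nlinarith
      have hm0 : sSup (lset J p x) = 0 := by rw [hk, hk0, zero_mul]
      exact ⟨hlat, hx, hm0⟩
  · -- (b) → (a)
    intro hb
    apply Set.Subset.antisymm
    · rintro y ⟨x, ⟨hx, hlat⟩, rfl⟩
      have hatt := sSup_mem_lset J p hJconv hJcpt hpJ hx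
      have hm0 : 0 ≤ sSup (lset J p x) := sSup_lset_nonneg J p hx
      have hclaim : ∃ k : ℕ, sSup (lset J p x) = (k : ℝ) * (denPt p : ℝ) := by
        set m := sSup (lset J p x) with hm
        set k := ⌊m / (denPt p : ℝ)⌋₊ with hkdef
        have hkler : (k : ℝ) * (denPt p : ℝ) ≤ m := by
          rw [← le_div_iff₀ hrR]
          exact Nat.floor_le (by positivity)
        have hlt : m < ((k : ℝ) + 1) * (denPt p : ℝ) := by
          have h1 := Nat.lt_floor_add_one (m / (denPt p : ℝ))
          calc m = (m / (denPt p : ℝ)) * (denPt p : ℝ) := by field_simp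
            _ < ((k : ℝ) + 1) * (denPt p : ℝ) := by
                exact mul_lt_mul_of_pos_right (by exact_mod_cast h1) hrR
        rcases eq_or_lt_of_le hkler with heq | hlt2
        · exact ⟨k, heq.symm⟩
        · exfalso
          have hkr_mem : ((k : ℝ) * (denPt p : ℝ)) ∈ lset J p x :=
            lt_sSup_mem_lset J p hJconv hpJ hx hlt2
          have hx'C : x - ((k : ℝ) * (denPt p : ℝ)) • emb p ∈ cone J := hkr_mem
          have hx'lat : IsLat (x - ((k : ℝ) * (denPt p : ℝ)) • emb p) :=
            IsLat.sub' hlat (isLat_nsmul_den_emb p hp k)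
          have hshift := sSup_lset_shift J p hJconv hpJ hkr_mem
          have hδpos : 0 < sSup (lset J p (x - ((k : ℝ) * (denPt p : ℝ)) • emb p)) := by
            rw [hshift]; linarith
          have hδlt : sSup (lset J p (x - ((k : ℝ) * (denPt p : ℝ)) • emb p)) < (denPt p : ℝ) := by
            rw [hshift]
            have : ((k : ℝ) + 1) * (denPt p : ℝ) = (k : ℝ) * (denPt p : ℝ) + (denPt p : ℝ) := by
              ring
            linarith [this ▸ hlt]
          have hx'mem : x - ((k : ℝ) * (denPt p : ℝ)) • emb p ∈
              latt (cone J) \ latt ((fun y => y + (denPt p : ℝ) • emb p) '' cone J) := by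
            refine ⟨⟨hx'C, hx'lat⟩, fun hmem => ?_⟩
            obtain ⟨hin, -⟩ := (mem_latt_image_iff J p).1 hmem
            have hle : (denPt p : ℝ) ≤ sSup (lset J p (x - ((k : ℝ) * (denPt p : ℝ)) • emb p)) :=
              le_csSup (bddAbove_lset J p _) hin
            linarith
          rw [← hb, mem_latt_plenv_iff J p hJconv hJcpt hpJ] at hx'mem
          exact (ne_of_gt hδpos) hx'mem.2.2
      obtain ⟨k, hk⟩ := hclaim
      refine ⟨⟨x, hx, rfl⟩, ?_⟩
      rw [epsP_eq]
      refine IsLat.sub' hlat ?_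
      rw [hk]
      exact isLat_nsmul_den_emb p hp k
    · intro y hy
      rw [mem_latt_plenv_iff J p hJconv hJcpt hpJ] at hy
      obtain ⟨hlat, hyC, hsup⟩ := hy
      refine ⟨y, ⟨hyC, hlat⟩, ?_⟩
      rw [epsP_eq, hsup]
      simp

end ArxivFreeSum
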